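/- Let {K_j} be Kraus operators of a quantum operation on ℂ^d with Σⱼ Kⱼ†Kⱼ = P ≤ 𝟙. Define operators on ℂ^d ⊗ ℂ² by L_j = K_j ⊗ |+̂⟩⟨+̂| + K_j* ⊗ |−̂⟩⟨−̂|, where |±̂⟩ = (|0⟩ ± i|1⟩)/√2 and K_j* is the entrywise complex conjugate. Then (i) each L_j has all real matrix entries in the computational product basis, (ii) Σⱼ Lⱼ†Lⱼ = P ⊗ |+̂⟩⟨+̂| + P^T ⊗ |−̂⟩⟨−̂| ≤ 𝟙 ⊗ 𝟙, and (iii) for any density matrix ρ on ℂ^d, Σⱼ Lⱼ (ρ ⊗ |+̂⟩⟨+̂|) Lⱼ† = (Σⱼ Kⱼ ρ Kⱼ†) ⊗ |+̂⟩⟨+̂|. -/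

import Mathlib

open Matrix ComplexOrder Kronecker

/-- Projector onto |+̂⟩ = (|0⟩ + i|1⟩)/√2. -/
noncomputable def Pplus : Matrix (Fin 2) (Fin 2) ℂ :=
  (1/2 : ℂ) • !![1, -Complex.I; Complex.I, 1]

/-- Projector onto |−̂⟩ = (|0⟩ − i|1⟩)/√2. -/
noncomputable def Pminus : Matrix (Fin 2) (Fin 2) ℂ :=
  (1/2 : ℂ) • !![1, Complex.I; -Complex.I, 1]

lemma Pplus_mul_Pplus : Pplus * Pplus = Pplus := by
  ext i j
  fin_cases i <;> fin_cases j <;>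
    simp [Pplus, Matrix.mul_apply, Fin.sum_univ_two, Complex.ext_iff] <;> ring_nf <;>
    simp [Complex.ext_iff]

lemma Pminus_mul_Pminus : Pminus * Pminus = Pminus := by
  ext i j
  fin_cases i <;> fin_cases j <;>
    simp [Pminus, Matrix.mul_apply, Fin.sum_univ_two, Complex.ext_iff] <;> ring_nf <;>
    simp [Complex.ext_iff]

lemma Pplus_mul_Pminus : Pplus * Pminus = 0 := by
  ext i j
  fin_cases i <;> fin_cases j <;>
    simp [Pplus, Pminus, Matrix.mul_apply, Fin.sum_univ_two, Complex.ext_iff] <;> ring_nf <;>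
    simp [Complex.ext_iff]

lemma Pminus_mul_Pplus : Pminus * Pplus = 0 := by
  ext i j
  fin_cases i <;> fin_cases j <;>
    simp [Pplus, Pminus, Matrix.mul_apply, Fin.sum_univ_two, Complex.ext_iff] <;> ring_nf <;>
    simp [Complex.ext_iff]

lemma Pplus_conjTranspose : Pplusᴴ = Pplus := by
  ext i j
  fin_cases i <;> fin_cases j <;> simp [Pplus, Complex.ext_iff]

lemma Pminus_conjTranspose : Pminusᴴ = Pminus := by
  ext i j
  fin_cases i <;> fin_cases j <;> simp [Pminus, Complex.ext_iff]

lemma Pplus_add_Pminus : Pplus + Pminus = 1 := by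
  ext i j
  fin_cases i <;> fin_cases j <;> simp [Pplus, Pminus, Complex.ext_iff] <;> norm_num

lemma Pminus_eq_star_Pplus (a b : Fin 2) : Pminus a b = star (Pplus a b) := by
  fin_cases a <;> fin_cases b <;> simp [Pplus, Pminus, Complex.ext_iff]

lemma kronecker_conjTranspose {l m n p : Type*} (A : Matrix l m ℂ) (B : Matrix n p ℂ) :
    (A ⊗ₖ B)ᴴ = Aᴴ ⊗ₖ Bᴴ := by
  ext i j
  simp [Matrix.conjTranspose_apply, Matrix.kroneckerMap_apply]

lemma sub_kronecker' {l m n p : Type*} (A B : Matrix l m ℂ) (C : Matrix n p ℂ) :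
    (A - B) ⊗ₖ C = A ⊗ₖ C - B ⊗ₖ C := by
  ext i j
  simp [Matrix.kroneckerMap_apply, sub_mul]

theorem real_dilation_with_one_imbit {d m : ℕ}
    (K : Fin m → Matrix (Fin d) (Fin d) ℂ) (P : Matrix (Fin d) (Fin d) ℂ)
    (hKP : ∑ j, (K j)ᴴ * K j = P) (hP : (1 - P).PosSemidef)
    (ρ : Matrix (Fin d) (Fin d) ℂ) (hρ : ρ.PosSemidef) (htr : ρ.trace = 1)
    (L : Fin m → Matrix (Fin d × Fin 2) (Fin d × Fin 2) ℂ)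
    (hL : ∀ j, L j = (K j) ⊗ₖ Pplus + ((K j).map star) ⊗ₖ Pminus) :
    (∀ j x y, ((L j) x y).im = 0) ∧
    (∑ j, (L j)ᴴ * L j = P ⊗ₖ Pplus + Pᵀ ⊗ₖ Pminus ∧
      (1 - (P ⊗ₖ Pplus + Pᵀ ⊗ₖ Pminus)).PosSemidef) ∧
    (∑ j, L j * (ρ ⊗ₖ Pplus) * (L j)ᴴ = (∑ j, K j * ρ * (K j)ᴴ) ⊗ₖ Pplus) := by
  have hmap : ∀ j, ((K j).map star)ᴴ = (K j)ᵀ := by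
    intro j; ext i k; simp [Matrix.conjTranspose_apply, Matrix.map_apply]
  have hLH : ∀ j, (L j)ᴴ = (K j)ᴴ ⊗ₖ Pplus + (K j)ᵀ ⊗ₖ Pminus := by
    intro j
    rw [hL j, Matrix.conjTranspose_add, kronecker_conjTranspose, kronecker_conjTranspose,
      Pplus_conjTranspose, Pminus_conjTranspose, hmap]
  refine ⟨?_, ⟨?_, ?_⟩, ?_⟩
  · intro j x y
    rw [hL j]
    simp only [Matrix.add_apply, Matrix.kroneckerMap_apply, Matrix.map_apply,
      Pminus_eq_star_Pplus, ← Complex.star_def]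
    rw [← star_mul']
    simp
    ring
  · have step : ∀ j, (L j)ᴴ * L j = ((K j)ᴴ * K j) ⊗ₖ Pplus + ((K j)ᴴ * K j)ᵀ ⊗ₖ Pminus := by
      intro j
      rw [hLH j, hL j]
      simp only [Matrix.add_mul, Matrix.mul_add, ← Matrix.mul_kronecker_mul, Pplus_mul_Pplus,
        Pplus_mul_Pminus, Pminus_mul_Pplus, Pminus_mul_Pminus, Matrix.kronecker_zero,
        add_zero, zero_add, Matrix.mul_zero, Matrix.zero_mul]
      have : (K j)ᵀ * (K j).map star = ((K j)ᴴ * K j)ᵀ := by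
        ext i k
        simp [Matrix.mul_apply, Matrix.transpose_apply, Matrix.conjTranspose_apply,
          Matrix.map_apply, mul_comm]
      rw [this]
    rw [Finset.sum_congr rfl fun j _ => step j, Finset.sum_add_distrib]
    congr 1
    · rw [← hKP]
      ext x y
      simp [Matrix.sum_apply, Matrix.kroneckerMap_apply, Finset.sum_mul]
    · rw [← hKP, Matrix.transpose_sum]
      ext x y
      simp [Matrix.sum_apply, Matrix.kroneckerMap_apply, Finset.sum_mul]
  · have hone : (1 : Matrix (Fin d × Fin 2) (Fin d × Fin 2) ℂ) =
        (1 : Matrix (Fin d) (Fin d) ℂ) ⊗ₖ Pplus + (1 : Matrix (Fin d) (Fin d) ℂ) ⊗ₖ Pminus := by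
      rw [← Matrix.kronecker_add, Pplus_add_Pminus, Matrix.one_kronecker_one]
    have hsplit : 1 - (P ⊗ₖ Pplus + Pᵀ ⊗ₖ Pminus) =
        (1 - P) ⊗ₖ Pplus + (1 - P)ᵀ ⊗ₖ Pminus := by
      rw [hone, Matrix.transpose_sub, Matrix.transpose_one, sub_kronecker', sub_kronecker']
      abel
    rw [hsplit]
    obtain ⟨A, hA⟩ : ∃ A : Matrix (Fin d) (Fin d) ℂ, 1 - P = Aᴴ * A := by
      open scoped MatrixOrder in
      exact CStarAlgebra.nonneg_iff_eq_star_mul_self.mp (Matrix.nonneg_iff_posSemidef.mpr hP)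
    obtain ⟨B, hB⟩ : ∃ B : Matrix (Fin d) (Fin d) ℂ, (1 - P)ᵀ = Bᴴ * B := by
      open scoped MatrixOrder in
      exact CStarAlgebra.nonneg_iff_eq_star_mul_self.mp
        (Matrix.nonneg_iff_posSemidef.mpr hP.transpose)
    have h1 : (1 - P) ⊗ₖ Pplus = (A ⊗ₖ Pplus)ᴴ * (A ⊗ₖ Pplus) := by
      rw [kronecker_conjTranspose, Pplus_conjTranspose, ← Matrix.mul_kronecker_mul,
        Pplus_mul_Pplus, hA]
    have h2 : (1 - P)ᵀ ⊗ₖ Pminus = (B ⊗ₖ Pminus)ᴴ * (B ⊗ₖ Pminus) := by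
      rw [kronecker_conjTranspose, Pminus_conjTranspose, ← Matrix.mul_kronecker_mul,
        Pminus_mul_Pminus]
      rw [Matrix.transpose_sub, Matrix.transpose_one] at hB ⊢
      rw [hB]
    rw [h1, h2]
    have p1 := Matrix.posSemidef_conjTranspose_mul_self (A ⊗ₖ Pplus)
    have p2 := Matrix.posSemidef_conjTranspose_mul_self (B ⊗ₖ Pminus)
    exact p1.add p2
  · have step : ∀ j, L j * (ρ ⊗ₖ Pplus) * (L j)ᴴ = (K j * ρ * (K j)ᴴ) ⊗ₖ Pplus := by
      intro j
      rw [hLH j, hL j]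
      simp only [Matrix.add_mul, Matrix.mul_add, ← Matrix.mul_kronecker_mul, Pplus_mul_Pplus,
        Pplus_mul_Pminus, Pminus_mul_Pplus, Pminus_mul_Pminus, Matrix.kronecker_zero,
        add_zero, zero_add, Matrix.mul_zero, Matrix.zero_mul]
    rw [Finset.sum_congr rfl fun j _ => step j]
    ext x y
    simp [Matrix.sum_apply, Matrix.kroneckerMap_apply, Finset.sum_mul]
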